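/- Let G be a group equipped with a left-invariant metric dist such that for every real r the ball {x ∈ G : dist(1,x) ≤ r} is a finite set. Then for every g ∈ G and every real R there exists a real R' such that for all h ∈ G: if dist(1, h·c) ≥ R' for every element c of the centralizer of g (i.e. every c with c·g = g·c), then dist(1, h·g·h⁻¹) > R. (This is the existence of the constant K_pre(g) established in the first step of the proof of Lemma 4.13 of the paper.) -/

import Mathlib

/-- Existence of the constant `K_pre(g)` from the first step of the proof of
Lemma 4.13: in a group with a left-invariant metric with finite balls, if the
coset `h · Cent(g)` is far from the identity, then `h * g * h⁻¹` is long. -/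
theorem exists_Kpre {G : Type*} [Group G] [MetricSpace G]
    (hinv : ∀ a x y : G, dist (a * x) (a * y) = dist x y)
    (hfin : ∀ r : ℝ, {x : G | dist (1 : G) x ≤ r}.Finite)
    (g : G) (R : ℝ) :
    ∃ R' : ℝ, ∀ h : G,
      (∀ c : G, c * g = g * c → R' ≤ dist (1 : G) (h * c)) →
      R < dist (1 : G) (h * g * h⁻¹) := by
  classical
  have hS := hfin R
  set F : G → ℝ := fun k =>
    if hk : ∃ h' : G, h' * g * h'⁻¹ = k then dist (1 : G) hk.choose else 0 with hF
  set M : Finset ℝ := insert 0 (hS.toFinset.image F) with hM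
  refine ⟨M.max' ⟨0, by simp [hM]⟩ + 1, fun h hyp => ?_⟩
  by_contra hle
  push_neg at hle
  have hkS : h * g * h⁻¹ ∈ hS.toFinset := by
    simp [Set.Finite.mem_toFinset]; exact hle
  have hex : ∃ h' : G, h' * g * h'⁻¹ = h * g * h⁻¹ := ⟨h, rfl⟩
  set h0 := hex.choose with hh0
  have hspec : h0 * g * h0⁻¹ = h * g * h⁻¹ := hex.choose_spec
  have hFk : F (h * g * h⁻¹) = dist (1 : G) h0 := by
    rw [hF]; simp only [dif_pos hex]; rfl
  have hmem : F (h * g * h⁻¹) ∈ M := by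
    rw [hM]
    exact Finset.mem_insert_of_mem (Finset.mem_image_of_mem F hkS)
  have hle' : dist (1 : G) h0 ≤ M.max' ⟨0, by simp [hM]⟩ := by
    rw [← hFk]; exact Finset.le_max' _ _ hmem
  -- c := h⁻¹ * h0 commutes with g
  have hc : (h⁻¹ * h0) * g = g * (h⁻¹ * h0) := by
    have : h⁻¹ * (h0 * g * h0⁻¹) * h = h⁻¹ * (h * g * h⁻¹) * h := by rw [hspec]
    have h1 : h⁻¹ * (h * g * h⁻¹) * h = g := by group
    rw [h1] at this
    calc (h⁻¹ * h0) * g = (h⁻¹ * (h0 * g * h0⁻¹) * h) * (h⁻¹ * h0) := by group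
      _ = g * (h⁻¹ * h0) := by rw [this]
  have := hyp (h⁻¹ * h0) hc
  have hhh : h * (h⁻¹ * h0) = h0 := by group
  rw [hhh] at this
  linarith
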